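/- (Left-division criterion via kernels.) Let μ and δ be matrix differential operators with coefficients in M_N(ℂ[[x]]), and suppose there exists a matrix differential operator ν with coefficients in M_N(ℂ[[x]]) such that νμ is monic. Then there exists a matrix differential operator η with coefficients in M_N(ℂ[[x]]) such that δ = μη (as operators acting on M_N(ℂ[[x]])) if and only if ker(μ) ⊆ ker(δ). -/

import Mathlib

open Matrix PowerSeries

/-- `N×N` complex matrices. -/
abbrev Mat (N : ℕ) := Matrix (Fin N) (Fin N) ℂ

/-- `N×N` matrices of formal power series. -/
abbrev MatPS (N : ℕ) := Matrix (Fin N) (Fin N) (PowerSeries ℂ)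

/-- Entrywise formal differentiation of a matrix of power series. -/
noncomputable def psmatD {N : ℕ} (f : MatPS N) : MatPS N :=
  f.map fun g => PowerSeries.derivativeFun g

/-- Right action of the matrix differential operator `∑ ∂ⁱ aᵢ` (orders `0,…,r`) with
power-series coefficients on a matrix of power series: `f ↦ ∑ f⁽ⁱ⁾ aᵢ`. -/
noncomputable def actPS {N : ℕ} (a : ℕ → MatPS N) (r : ℕ) (f : MatPS N) : MatPS N :=
  ∑ i ∈ Finset.range (r + 1), (psmatD)^[i] f * a i

/-- Embed a constant matrix into matrices of power series. -/
noncomputable def constPS {N : ℕ} (c : Mat N) : MatPS N :=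
  c.map fun z => PowerSeries.C z

namespace LDAux

variable {N : ℕ}

lemma dF_zero : derivativeFun (0 : PowerSeries ℂ) = 0 := by
  ext n; change coeff n (derivative ℂ 0) = _; simp [coeff_derivativeFun]

lemma dF_sum {ι : Type*} (F : Finset ι) (f : ι → PowerSeries ℂ) :
    derivativeFun (∑ i ∈ F, f i) = ∑ i ∈ F, derivativeFun (f i) := by
  classical
  induction F using Finset.induction with
  | empty => simp [dF_zero]
  | insert _ _ hx ih =>
    rw [Finset.sum_insert hx, derivativeFun_add, ih, Finset.sum_insert hx]

lemma dF_sub (f g : PowerSeries ℂ) :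
    derivativeFun (f - g) = derivativeFun f - derivativeFun g := by
  ext n; change coeff n (derivative ℂ (f - g)) = coeff n (derivative ℂ f) - coeff n (derivative ℂ g)
  simp [coeff_derivativeFun, sub_mul]

lemma psmatD_apply (f : MatPS N) (i j : Fin N) : psmatD f i j = derivativeFun (f i j) := rfl

/-- `psmatD` as an additive monoid hom. -/
noncomputable def psmatDHom : MatPS N →+ MatPS N where
  toFun := psmatD
  map_zero' := by ext i j; simp [psmatD_apply, dF_zero]
  map_add' f g := by
    apply Matrix.ext; intro i j
    simp [psmatD_apply, Matrix.add_apply, derivativeFun_add]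

lemma psmatD_add (f g : MatPS N) : psmatD (f + g) = psmatD f + psmatD g :=
  psmatDHom.map_add f g

lemma psmatD_zero : psmatD (0 : MatPS N) = 0 := psmatDHom.map_zero

lemma psmatD_sub (f g : MatPS N) : psmatD (f - g) = psmatD f - psmatD g :=
  psmatDHom.map_sub f g

lemma psmatD_sum {ι : Type*} (F : Finset ι) (f : ι → MatPS N) :
    psmatD (∑ i ∈ F, f i) = ∑ i ∈ F, psmatD (f i) :=
  map_sum psmatDHom f F

lemma psmatD_mul (f g : MatPS N) :
    psmatD (f * g) = psmatD f * g + f * psmatD g := by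
  apply Matrix.ext; intro i j
  rw [psmatD_apply, Matrix.mul_apply, dF_sum]
  simp only [derivativeFun_mul]
  rw [Finset.sum_add_distrib]
  simp only [Matrix.add_apply, Matrix.mul_apply, psmatD_apply]
  rw [add_comm]
  congr 1
  exact Finset.sum_congr rfl fun k _ => mul_comm _ _

lemma iterD_zero (n : ℕ) : (psmatD)^[n] (0 : MatPS N) = 0 := by
  induction n with
  | zero => rfl
  | succ n ih => rw [Function.iterate_succ_apply' psmatD n 0, ih, psmatD_zero]

lemma iterD_sub (n : ℕ) (f g : MatPS N) :
    (psmatD)^[n] (f - g) = (psmatD)^[n] f - (psmatD)^[n] g := by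
  induction n with
  | zero => rfl
  | succ n ih =>
    rw [Function.iterate_succ_apply' psmatD n (f - g), ih, psmatD_sub,
      Function.iterate_succ_apply' psmatD n f, Function.iterate_succ_apply' psmatD n g]

lemma actPS_zero (a : ℕ → MatPS N) (r : ℕ) : actPS a r 0 = 0 := by
  simp [actPS, iterD_zero]

lemma actPS_sub (a : ℕ → MatPS N) (r : ℕ) (f g : MatPS N) :
    actPS a r (f - g) = actPS a r f - actPS a r g := by
  simp [actPS, iterD_sub, sub_mul, Finset.sum_sub_distrib]

/-- matrix of `n`-th coefficients -/
noncomputable def mcoeff {N : ℕ} (n : ℕ) (f : MatPS N) : Mat N :=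
  Matrix.of fun i j => PowerSeries.coeff n (f i j)

lemma mcoeff_apply (n : ℕ) (f : MatPS N) (i j : Fin N) :
    mcoeff n f i j = PowerSeries.coeff n (f i j) := rfl

noncomputable def mcoeffHom (n : ℕ) : MatPS N →+ Mat N where
  toFun := mcoeff n
  map_zero' := by apply Matrix.ext; intro i j; simp [mcoeff_apply]
  map_add' f g := by
    apply Matrix.ext; intro i j
    simp [mcoeff_apply, Matrix.add_apply]

lemma mcoeff_zero (n : ℕ) : mcoeff n (0 : MatPS N) = 0 := (mcoeffHom n).map_zero

lemma mcoeff_sum {ι : Type*} (n : ℕ) (F : Finset ι) (f : ι → MatPS N) :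
    mcoeff n (∑ i ∈ F, f i) = ∑ i ∈ F, mcoeff n (f i) :=
  map_sum (mcoeffHom n) f F

lemma matps_ext {f g : MatPS N} (h : ∀ n, mcoeff n f = mcoeff n g) : f = g := by
  apply Matrix.ext; intro i j
  apply PowerSeries.ext; intro n
  have := congrFun (congrFun (h n) i) j
  simpa [mcoeff_apply] using this

lemma mcoeff_mul (n : ℕ) (f g : MatPS N) :
    mcoeff n (f * g) = ∑ p ∈ Finset.range (n + 1), mcoeff p f * mcoeff (n - p) g := by
  apply Matrix.ext; intro i j
  have e1 : ∀ k, (coeff n) (f i k * g k j)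
      = ∑ p ∈ Finset.range (n + 1), coeff p (f i k) * coeff (n - p) (g k j) := by
    intro k
    rw [PowerSeries.coeff_mul]
    exact Finset.Nat.sum_antidiagonal_eq_sum_range_succ
      (fun p q => (coeff p) (f i k) * (coeff q) (g k j)) n
  rw [mcoeff_apply, Matrix.mul_apply, map_sum]
  simp only [e1]
  rw [Finset.sum_comm]
  simp [Matrix.sum_apply, Matrix.mul_apply, mcoeff_apply]

lemma mcoeff_D (n : ℕ) (f : MatPS N) :
    mcoeff n (psmatD f) = (n + 1) • mcoeff (n + 1) f := by
  apply Matrix.ext; intro i j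
  rw [mcoeff_apply, psmatD_apply, show derivativeFun (f i j) = derivative ℂ (f i j) from rfl,
    coeff_derivativeFun, Matrix.smul_apply, mcoeff_apply,
    nsmul_eq_mul]
  push_cast
  ring

/-- `cnat p i = (p+i)!/p!` -/
def cnat (p i : ℕ) : ℕ := ∏ j ∈ Finset.range i, (p + j + 1)

lemma cnat_pos (p i : ℕ) : 0 < cnat p i :=
  Finset.prod_pos fun j _ => by omega

lemma mcoeff_iterD (n i : ℕ) (f : MatPS N) :
    mcoeff n ((psmatD)^[i] f) = cnat n i • mcoeff (n + i) f := by
  induction i generalizing f with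
  | zero => simp [cnat]
  | succ i ih =>
    rw [Function.iterate_succ_apply, ih, mcoeff_D, smul_smul]
    have h1 : cnat n i * (n + i + 1) = cnat n (i + 1) := by
      rw [cnat, cnat, Finset.prod_range_succ]
    rw [h1]
    rfl

lemma mcoeff_one (q : ℕ) :
    mcoeff q (1 : MatPS N) = if q = 0 then (1 : Mat N) else 0 := by
  apply Matrix.ext; intro i j
  by_cases hq : q = 0 <;>
    simp [mcoeff_apply, Matrix.one_apply, apply_ite (coeff q),
      PowerSeries.coeff_one, hq]

lemma mcoeff_act (g : ℕ → MatPS N) (u n : ℕ) (ψ : MatPS N) :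
    mcoeff n (actPS g u ψ) = ∑ i ∈ Finset.range (u + 1), ∑ p ∈ Finset.range (n + 1),
      cnat p i • mcoeff (p + i) ψ * mcoeff (n - p) (g i) := by
  rw [actPS, mcoeff_sum]
  refine Finset.sum_congr rfl fun i _ => ?_
  rw [mcoeff_mul]
  refine Finset.sum_congr rfl fun p _ => ?_
  rw [mcoeff_iterD, smul_mul_assoc]

/-- Recursively defined coefficients of a solution `ψ` of `ψ·e = h` with prescribed
initial coefficients, where `e` is monic of order `m`.  `E i q` is the `q`-th
coefficient matrix of `e i` and `H n` the `n`-th coefficient matrix of `h`. -/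
noncomputable def solC {N : ℕ} (m : ℕ) (E : ℕ → ℕ → Mat N) (H : ℕ → Mat N)
    (init : ℕ → Mat N) : ℕ → Mat N := fun k =>
  if hk : k < m then init k
  else ((cnat (k - m) m : ℂ))⁻¹ •
    (H (k - m) - ∑ i ∈ (Finset.range m).attach, ∑ p ∈ (Finset.range (k - m + 1)).attach,
      cnat p.1 i.1 • solC m E H init (p.1 + i.1) * E i.1 (k - m - p.1))
termination_by k => k
decreasing_by
  have hi := Finset.mem_range.mp i.2
  have hp := Finset.mem_range.mp p.2
  omega

/-- matrix power series with prescribed coefficient matrices -/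
noncomputable def mkMat {N : ℕ} (Ψ : ℕ → Mat N) : MatPS N :=
  Matrix.of fun i j => PowerSeries.mk fun k => Ψ k i j

lemma mcoeff_mkMat {N : ℕ} (Ψ : ℕ → Mat N) (n : ℕ) : mcoeff n (mkMat Ψ) = Ψ n := by
  apply Matrix.ext; intro i j
  simp [mcoeff_apply, mkMat, PowerSeries.coeff_mk]

lemma exists_solution {N : ℕ} (m : ℕ) (e : ℕ → MatPS N) (he : e m = 1) (h : MatPS N)
    (init : ℕ → Mat N) :
    ∃ ψ : MatPS N, actPS e m ψ = h ∧ ∀ k, k < m → mcoeff k ψ = init k := by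
  set E : ℕ → ℕ → Mat N := fun i q => mcoeff q (e i) with hE
  set H : ℕ → Mat N := fun n => mcoeff n h with hH
  set Ψ : ℕ → Mat N := solC m E H init with hΨ
  refine ⟨mkMat Ψ, ?_, fun k hk => by rw [mcoeff_mkMat, hΨ, solC, dif_pos hk]⟩
  apply matps_ext; intro n
  rw [mcoeff_act]
  -- split off the top-order (i = m) part
  rw [Finset.sum_range_succ]
  have hEm : ∀ q : ℕ, mcoeff q (e m) = if q = 0 then (1 : Mat N) else 0 := fun q => by
    rw [he, mcoeff_one]
  have htop : ∑ p ∈ Finset.range (n + 1),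
      cnat p m • mcoeff (p + m) (mkMat Ψ) * mcoeff (n - p) (e m)
      = cnat n m • Ψ (n + m) := by
    rw [Finset.sum_range_succ]
    have h0 : ∀ p ∈ Finset.range n,
        cnat p m • mcoeff (p + m) (mkMat Ψ) * mcoeff (n - p) (e m) = 0 := by
      intro p hp
      have hp' : n - p ≠ 0 := by have := Finset.mem_range.mp hp; omega
      have : mcoeff (n - p) (e m) = 0 := by
        rw [hEm (n - p), if_neg hp']
      rw [this, mul_zero]
    rw [Finset.sum_eq_zero h0, zero_add, Nat.sub_self]
    have h1 : mcoeff 0 (e m) = 1 := by rw [hEm 0, if_pos rfl]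
    rw [h1, mul_one, mcoeff_mkMat]
  rw [htop]
  -- identify the lower part with the sum in the recursion
  have hlow : ∀ i ∈ Finset.range m, ∀ p ∈ Finset.range (n + 1),
      cnat p i • mcoeff (p + i) (mkMat Ψ) * mcoeff (n - p) (e i)
      = cnat p i • Ψ (p + i) * E i (n - p) := by
    intro i _ p _
    rw [mcoeff_mkMat, hE]
  have hrec : Ψ (n + m) = ((cnat n m : ℂ))⁻¹ •
      (H n - ∑ i ∈ Finset.range m, ∑ p ∈ Finset.range (n + 1),
        cnat p i • Ψ (p + i) * E i (n - p)) := by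
    rw [hΨ, solC, dif_neg (by omega : ¬ n + m < m)]
    have hnm : n + m - m = n := by omega
    rw [hnm]
    congr 1
    congr 1
    rw [← Finset.sum_attach (Finset.range m)
      (fun i => ∑ p ∈ Finset.range (n + 1), cnat p i • Ψ (p + i) * E i (n - p))]
    refine Finset.sum_congr rfl fun i _ => ?_
    rw [← Finset.sum_attach (Finset.range (n + 1))
      (fun p => cnat p i.1 • Ψ (p + i.1) * E i.1 (n - p))]
  have hcnat : ((cnat n m : ℕ) : ℂ) ≠ 0 :=
    Nat.cast_ne_zero.mpr (cnat_pos n m).ne'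
  calc (∑ i ∈ Finset.range m, ∑ p ∈ Finset.range (n + 1),
        cnat p i • mcoeff (p + i) (mkMat Ψ) * mcoeff (n - p) (e i)) + cnat n m • Ψ (n + m)
      = (∑ i ∈ Finset.range m, ∑ p ∈ Finset.range (n + 1),
        cnat p i • Ψ (p + i) * E i (n - p)) + cnat n m • Ψ (n + m) := by
        congr 1
        exact Finset.sum_congr rfl fun i hi => Finset.sum_congr rfl fun p hp => hlow i hi p hp
    _ = H n := by
        rw [hrec, ← Nat.cast_smul_eq_nsmul ℂ (cnat n m), smul_inv_smul₀ hcnat]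
        abel

lemma low_order_vanish {N : ℕ} (m : ℕ) (e : ℕ → MatPS N) (he : e m = 1) (u : ℕ) (hu : u < m)
    (g : ℕ → MatPS N) (hker : ∀ ψ, actPS e m ψ = 0 → actPS g u ψ = 0) :
    ∀ i ≤ u, g i = 0 := by
  suffices hS : ∀ w : ℕ, ∀ i ≤ u, mcoeff w (g i) = 0 by
    intro i hi
    apply matps_ext; intro w
    rw [hS w i hi, mcoeff_zero]
  intro w
  induction w using Nat.strong_induction_on with
  | _ w IH =>
    intro i0 hi0
    obtain ⟨ψ, hψe, hψinit⟩ :=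
      exists_solution m e he 0 (fun k => if k = i0 then (1 : Mat N) else 0)
    have hc := congrArg (mcoeff w) (hker ψ hψe)
    rw [mcoeff_act, mcoeff_zero] at hc
    have hsplit : ∀ i ∈ Finset.range (u + 1),
        (∑ p ∈ Finset.range (w + 1), cnat p i • mcoeff (p + i) ψ * mcoeff (w - p) (g i))
        = cnat 0 i • mcoeff (0 + i) ψ * mcoeff w (g i) := by
      intro i hi
      have hiu : i ≤ u := by have := Finset.mem_range.mp hi; omega
      rw [Finset.sum_range_succ']
      have hz : ∀ p ∈ Finset.range w,
          cnat (p + 1) i • mcoeff (p + 1 + i) ψ * mcoeff (w - (p + 1)) (g i) = 0 := by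
        intro p hp
        have hpw := Finset.mem_range.mp hp
        rw [IH (w - (p + 1)) (by omega) i hiu, mul_zero]
      rw [Finset.sum_eq_zero hz, zero_add, Nat.sub_zero]
    rw [Finset.sum_congr rfl hsplit] at hc
    have hfin : ∀ i ∈ Finset.range (u + 1), i ≠ i0 →
        cnat 0 i • mcoeff (0 + i) ψ * mcoeff w (g i) = 0 := by
      intro i hi hne
      have hiu : i ≤ u := by have := Finset.mem_range.mp hi; omega
      rw [Nat.zero_add, hψinit i (by omega), if_neg hne, smul_zero, zero_mul]
    rw [Finset.sum_eq_single_of_mem i0 (Finset.mem_range.mpr (by omega)) hfin] at hc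
    rw [Nat.zero_add, hψinit i0 (by omega), if_pos rfl, smul_mul_assoc, one_mul] at hc
    have hcnat : ((cnat 0 i0 : ℕ) : ℂ) ≠ 0 := Nat.cast_ne_zero.mpr (cnat_pos 0 i0).ne'
    rw [← Nat.cast_smul_eq_nsmul ℂ (cnat 0 i0)] at hc
    exact (smul_eq_zero.mp hc).resolve_left hcnat

lemma act_surj {N : ℕ} (m : ℕ) (e : ℕ → MatPS N) (he : e m = 1) (h : MatPS N) :
    ∃ f, actPS e m f = h :=
  (exists_solution m e he h 0).elim fun ψ hψ => ⟨ψ, hψ.1⟩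

lemma act_pad {N : ℕ} (g : ℕ → MatPS N) (u U : ℕ) (hU : u ≤ U) (f : MatPS N) :
    actPS g u f = actPS (fun n => if n ≤ u then g n else 0) U f := by
  have h1 : ∑ n ∈ Finset.range (U + 1), psmatD^[n] f * (if n ≤ u then g n else 0)
      = ∑ n ∈ Finset.range (u + 1), psmatD^[n] f * (if n ≤ u then g n else 0) :=
    (Finset.sum_subset (Finset.range_subset_range.mpr (by omega)) (fun x hx hnx => by
      rw [if_neg (by simp [Finset.mem_range] at hnx; omega), mul_zero])).symm
  rw [actPS, actPS, h1]
  exact Finset.sum_congr rfl fun n hn => by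
    rw [if_pos (by have := Finset.mem_range.mp hn; omega)]

lemma act_add_same {N : ℕ} (A B : ℕ → MatPS N) (U : ℕ) (h : MatPS N) :
    actPS A U h + actPS B U h = actPS (fun n => A n + B n) U h := by
  rw [actPS, actPS, actPS, ← Finset.sum_add_distrib]
  exact Finset.sum_congr rfl fun n _ => (mul_add _ _ _).symm

lemma act_add_ops {N : ℕ} (g1 g2 : ℕ → MatPS N) (u1 u2 : ℕ) (f : MatPS N) :
    actPS g1 u1 f + actPS g2 u2 f
      = actPS (fun n => (if n ≤ u1 then g1 n else 0) + (if n ≤ u2 then g2 n else 0))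
          (max u1 u2) f := by
  rw [act_pad g1 u1 (max u1 u2) (le_max_left _ _) f,
    act_pad g2 u2 (max u1 u2) (le_max_right _ _) f, act_add_same]

lemma act_single {N : ℕ} (j U : ℕ) (hj : j ≤ U) (M : MatPS N) (h : MatPS N) :
    actPS (fun n => if n = j then M else 0) U h = psmatD^[j] h * M := by
  rw [actPS, Finset.sum_eq_single_of_mem j (Finset.mem_range.mpr (by omega))
    (fun n _ hn => by rw [if_neg hn, mul_zero])]
  rw [if_pos rfl]

lemma act_mulconst {N : ℕ} (g : ℕ → MatPS N) (u : ℕ) (f M : MatPS N) :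
    actPS g u f * M = actPS (fun n => g n * M) u f := by
  rw [actPS, actPS, Finset.sum_mul]
  exact Finset.sum_congr rfl fun n _ => mul_assoc _ _ _

lemma D_act {N : ℕ} (c : ℕ → MatPS N) (t : ℕ) :
    ∃ h : ℕ → MatPS N, (∀ f, psmatD (actPS c t f) = actPS h (t + 1) f) ∧ h (t + 1) = c t := by
  refine ⟨fun n => (if n = 0 then 0 else c (n - 1)) + (if n ≤ t then psmatD (c n) else 0),
    fun f => ?_, by
      show (if t + 1 = 0 then 0 else c (t + 1 - 1)) + (if t + 1 ≤ t then psmatD (c (t + 1)) else 0) = c t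
      rw [if_neg (by omega), if_neg (by omega), add_zero, Nat.add_sub_cancel]⟩
  rw [actPS, psmatD_sum]
  have hterm : ∀ i, psmatD (psmatD^[i] f * c i)
      = psmatD^[i + 1] f * c i + psmatD^[i] f * psmatD (c i) := by
    intro i
    rw [psmatD_mul, Function.iterate_succ_apply' psmatD i f]
  simp only [hterm]
  rw [Finset.sum_add_distrib, actPS]
  have hsplit : ∀ n, psmatD^[n] f *
      ((if n = 0 then 0 else c (n - 1)) + (if n ≤ t then psmatD (c n) else 0))
      = psmatD^[n] f * (if n = 0 then 0 else c (n - 1))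
        + psmatD^[n] f * (if n ≤ t then psmatD (c n) else 0) := fun n => mul_add _ _ _
  simp only [hsplit]
  rw [Finset.sum_add_distrib]
  congr 1
  · conv_rhs => rw [Finset.sum_range_succ']
    rw [if_pos rfl, mul_zero, add_zero]
    exact Finset.sum_congr rfl fun n _ => by
      rw [if_neg (by omega), Nat.add_sub_cancel]
  · conv_rhs => rw [Finset.sum_range_succ]
    rw [if_neg (by omega : ¬ t + 1 ≤ t), mul_zero, add_zero]
    exact Finset.sum_congr rfl fun n hn => by
      rw [if_pos (by have := Finset.mem_range.mp hn; omega)]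

lemma iterD_act {N : ℕ} (c : ℕ → MatPS N) (t : ℕ) (k : ℕ) :
    ∃ h : ℕ → MatPS N, (∀ f, psmatD^[k] (actPS c t f) = actPS h (t + k) f) ∧ h (t + k) = c t := by
  induction k with
  | zero => exact ⟨c, fun f => rfl, rfl⟩
  | succ k ih =>
    obtain ⟨h, hh, htop⟩ := ih
    obtain ⟨h', hh', htop'⟩ := D_act h (t + k)
    refine ⟨h', fun f => ?_, by
      rw [show t + (k + 1) = t + k + 1 from rfl, htop', htop]⟩
    rw [Function.iterate_succ_apply' psmatD k (actPS c t f), hh f, hh' (f := f),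
      Nat.add_assoc]

lemma sum_act {N : ℕ} {ι : Type*} [DecidableEq ι] (F : Finset ι) (uu : ι → ℕ)
    (gg : ι → ℕ → MatPS N) :
    ∃ u g, ∀ f, (∑ j ∈ F, actPS (gg j) (uu j) f) = actPS g u f := by
  induction F using Finset.induction with
  | empty => exact ⟨0, fun _ => 0, fun f => by simp [actPS]⟩
  | @insert x F hx ih =>
    obtain ⟨u, g, hg⟩ := ih
    exact ⟨max (uu x) u,
      fun n => (if n ≤ uu x then gg x n else 0) + (if n ≤ u then g n else 0),
      fun f => by rw [Finset.sum_insert hx, hg f, act_add_ops]⟩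

lemma comp_act {N : ℕ} (b c : ℕ → MatPS N) (s t : ℕ) :
    ∃ u g, ∀ f, actPS b s (actPS c t f) = actPS g u f := by
  choose h hh htop using fun k => iterD_act c t k
  obtain ⟨u, g, hg⟩ := sum_act (Finset.range (s + 1)) (fun j => t + j)
    (fun j n => h j n * b j)
  refine ⟨u, g, fun f => ?_⟩
  rw [← hg f, actPS]
  refine Finset.sum_congr rfl fun j _ => ?_
  rw [hh j f, act_mulconst]

lemma division {N : ℕ} (m : ℕ) (e : ℕ → MatPS N) (he : e m = 1) :
    ∀ u (g : ℕ → MatPS N), (∀ ψ, actPS e m ψ = 0 → actPS g u ψ = 0) →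
      ∃ u' q, ∀ f, actPS g u f = actPS q u' (actPS e m f) := by
  intro u
  induction u using Nat.strong_induction_on with
  | _ u IH =>
    intro g hker
    by_cases hm : m = 0
    · subst hm
      have hid : ∀ f : MatPS N, actPS e 0 f = f := fun f => by
        rw [actPS]
        simp [he]
      exact ⟨u, g, fun f => by rw [hid f]⟩
    by_cases hum : u < m
    · have hz := low_order_vanish m e he u hum g hker
      refine ⟨0, fun _ => 0, fun f => ?_⟩
      have l : actPS g u f = 0 := by
        rw [actPS]
        apply Finset.sum_eq_zero
        intro i hi
        rw [hz i (by have := Finset.mem_range.mp hi; omega), mul_zero]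
      rw [l, actPS]
      simp
    · push_neg at hum
      obtain ⟨h', hh', htop⟩ := iterD_act e m (u - m)
      have hmu : m + (u - m) = u := by omega
      rw [hmu] at hh' htop
      set p : ℕ → MatPS N := fun n => h' n * g u with hp
      have hS : ∀ f, psmatD^[u - m] (actPS e m f) * g u = actPS p u f := by
        intro f
        rw [hh' f, act_mulconst]
      set g' : ℕ → MatPS N := fun n => g n - p n with hg'
      have hsub : ∀ f, actPS g' u f = actPS g u f - actPS p u f := by
        intro f
        rw [actPS, actPS, actPS, ← Finset.sum_sub_distrib]
        exact Finset.sum_congr rfl fun n _ => mul_sub _ _ _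
      have hgu : g' u = 0 := by
        rw [hg']
        simp only [hp, htop, he, one_mul, sub_self]
      obtain ⟨v, hv⟩ : ∃ v, u = v + 1 := ⟨u - 1, by omega⟩
      have hdrop : ∀ f, actPS g' u f = actPS g' v f := by
        intro f
        have hgu' : g' (v + 1) = 0 := by rw [← hv]; exact hgu
        rw [hv, actPS, Finset.sum_range_succ, hgu', mul_zero, add_zero, actPS]
      have hker' : ∀ ψ, actPS e m ψ = 0 → actPS g' v ψ = 0 := by
        intro ψ hψ
        rw [← hdrop ψ, hsub ψ, hker ψ hψ, ← hS ψ, hψ, iterD_zero, zero_mul, sub_zero]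
      obtain ⟨u', q', hq'⟩ := IH v (by omega) g' hker'
      refine ⟨max u' (u - m),
        fun n => (if n ≤ u' then q' n else 0) + (if n = u - m then g u else 0), fun f => ?_⟩
      have key : actPS g u f
          = actPS q' u' (actPS e m f) + psmatD^[u - m] (actPS e m f) * g u := by
        have h2 : actPS g u f = actPS g' u f + actPS p u f := by
          rw [hsub f]; abel
        rw [h2, hdrop f, hq' f, hS f]
      rw [key,
        act_pad q' u' (max u' (u - m)) (le_max_left _ _) (actPS e m f),
        ← act_single (u - m) (max u' (u - m)) (le_max_right _ _) (g u) (actPS e m f),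
        act_add_same]

end LDAux

/-- **Left-division criterion via kernels.**  Let `μ = (a,r)` and `δ = (b,s)` be matrix
differential operators over `M_N(ℂ[[x]])` and suppose `νμ` is monic for some operator
`ν = (c,t)`.  Then `δ = μη` for some matrix differential operator `η` if and only if
`ker(μ) ⊆ ker(δ)`. -/
theorem left_division_iff_kernel_subset {N : ℕ} (r s t : ℕ)
    (a b c : ℕ → MatPS N)
    -- νμ is monic, i.e. p·(νμ) = (p·ν)·μ is given by a monic operator:
    (hmonic : ∃ (m : ℕ) (e : ℕ → MatPS N), e m = 1 ∧
      ∀ f : MatPS N, actPS e m f = actPS a r (actPS c t f)) :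
    (∃ (s' : ℕ) (d : ℕ → MatPS N),
        ∀ f : MatPS N, actPS b s f = actPS d s' (actPS a r f)) ↔
      ∀ ψ : MatPS N, actPS a r ψ = 0 → actPS b s ψ = 0 := by

  obtain ⟨m, e, he, hee⟩ := hmonic
  constructor
  · rintro ⟨s', d, hd⟩ ψ hψ
    rw [hd ψ, hψ, LDAux.actPS_zero]
  · intro K
    obtain ⟨u, g, hg⟩ := LDAux.comp_act b c s t
    have hker : ∀ ψ, actPS e m ψ = 0 → actPS g u ψ = 0 := by
      intro ψ hψ
      have h1 : actPS a r (actPS c t ψ) = 0 := by rw [← hee ψ, hψ]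
      rw [← hg ψ]
      exact K _ h1
    obtain ⟨u', q, hq⟩ := LDAux.division m e he u g hker
    refine ⟨u', q, fun f => ?_⟩
    obtain ⟨g₀, hg₀⟩ := LDAux.act_surj m e he (actPS a r f)
    have hfc : actPS a r (f - actPS c t g₀) = 0 := by
      rw [LDAux.actPS_sub, ← hee g₀, hg₀, sub_self]
    have hbfc : actPS b s (f - actPS c t g₀) = 0 := K _ hfc
    have hbf : actPS b s f = actPS b s (actPS c t g₀) := by
      have h3 := LDAux.actPS_sub b s f (actPS c t g₀)
      rw [hbfc] at h3
      exact sub_eq_zero.mp h3.symm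
    rw [hbf, hg g₀, hq g₀, hg₀]
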